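/- If G is a proper convex subgraph of an antipodal partial cube H of VC-dimension at most d, then G has VC-dimension at most d − 1. -/

import Mathlib

open Finset
open scoped Classical

variable {U : Type*}

/-- Hamming distance between two vertices of the hypercube `U → Bool`. -/
def hDist [Fintype U] [DecidableEq U] (x y : U → Bool) : ℕ :=
  (Finset.univ.filter fun i => x i ≠ y i).card

/-- The hypercube graph on `U → Bool`: two vertices are adjacent iff they differ
in exactly one coordinate. -/
def cubeGraph (U : Type*) [Fintype U] [DecidableEq U] : SimpleGraph (U → Bool) where
  Adj x y := hDist x y = 1
  symm := by
    constructor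
    intro x y h
    have hs : (Finset.univ.filter fun i => y i ≠ x i) =
        (Finset.univ.filter fun i => x i ≠ y i) := by
      apply Finset.filter_congr
      intro i _
      exact ne_comm
    simpa [hDist, hs] using h
  loopless := by
    constructor
    intro x h
    simp [hDist] at h

/-- Distance between `x` and `y` inside the subgraph of the hypercube induced by `A`
(`0` if one of them is not in `A`). -/
noncomputable def dIn [Fintype U] [DecidableEq U] (A : Set (U → Bool)) (x y : U → Bool) : ℕ :=
  if h : x ∈ A ∧ y ∈ A then ((cubeGraph U).induce A).dist ⟨x, h.1⟩ ⟨y, h.2⟩ else 0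

/-- A set of vertices of the hypercube is a partial cube if its induced graph is connected
and the induced graph distance coincides with the Hamming distance
(i.e. it is an isometric subgraph of the hypercube). -/
def IsPartialCube [Fintype U] [DecidableEq U] (A : Set (U → Bool)) : Prop :=
  ((cubeGraph U).induce A).Connected ∧ ∀ x ∈ A, ∀ y ∈ A, dIn A x y = hDist x y

/-- `A` shatters the coordinate set `X`. -/
def Shatters [Fintype U] [DecidableEq U] (A : Set (U → Bool)) (X : Finset U) : Prop :=
  ∀ g : U → Bool, ∃ a ∈ A, ∀ i ∈ X, a i = g i

/-- `A` strongly shatters `X`: it contains a full subcube over the coordinates `X`. -/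
def StronglyShatters [Fintype U] [DecidableEq U] (A : Set (U → Bool)) (X : Finset U) : Prop :=
  ∃ a : U → Bool, ∀ g : U → Bool, (fun i => if i ∈ X then g i else a i) ∈ A

/-- An ample set family: every shattered set is strongly shattered. -/
def IsAmple [Fintype U] [DecidableEq U] (A : Set (U → Bool)) : Prop :=
  ∀ X : Finset U, Shatters A X → StronglyShatters A X

/-- A partial cube is antipodal if every vertex `v` has an antipode `w` such that the whole
graph is the interval `I(v,w)`. -/
def IsAntipodal [Fintype U] [DecidableEq U] (A : Set (U → Bool)) : Prop :=
  ∀ v ∈ A, ∃ w ∈ A, ∀ x ∈ A, dIn A v x + dIn A x w = dIn A v w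

/-- A proper convex subgraph of an antipodal partial cube of VC-dimension
at most `d` has VC-dimension at most `d - 1`. -/
lemma hDist_eq_zero [Fintype U] [DecidableEq U] {x y : U → Bool} (h : hDist x y = 0) : x = y := by
  funext i
  by_contra hi
  have : i ∈ Finset.univ.filter fun i => x i ≠ y i := by simp [hi]
  rw [hDist, Finset.card_eq_zero] at h
  simp [h] at this

lemma hDist_add_eq_iff [Fintype U] [DecidableEq U] (a x b : U → Bool) :
    hDist a x + hDist x b = hDist a b ↔ ∀ i, a i = b i → x i = a i := by
  set s := Finset.univ.filter fun i => a i ≠ x i with hs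
  set t := Finset.univ.filter fun i => x i ≠ b i with ht
  set u := Finset.univ.filter fun i => a i ≠ b i with hu
  have hsub : u ⊆ s ∪ t := by
    intro i hi
    simp only [hs, ht, hu, Finset.mem_filter, Finset.mem_union, Finset.mem_univ, true_and] at *
    by_contra hc
    push_neg at hc
    exact hi (hc.1.trans hc.2)
  have hdd : hDist a x = s.card ∧ hDist x b = t.card ∧ hDist a b = u.card := ⟨rfl, rfl, rfl⟩
  constructor
  · intro h i hab
    by_contra hxa
    have his : i ∈ s := by
      simp only [hs, Finset.mem_filter, Finset.mem_univ, true_and]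
      exact fun hh => hxa hh.symm
    have hit : i ∈ t := by
      simp only [ht, Finset.mem_filter, Finset.mem_univ, true_and]
      intro hxb
      exact hxa (hxb.trans hab.symm)
    have hiu : i ∉ u := by simp [hu, hab]
    have h1 : insert i u ⊆ s ∪ t := by
      intro j hj
      rcases Finset.mem_insert.mp hj with rfl | hj
      · exact Finset.mem_union.mpr (Or.inl his)
      · exact hsub hj
    have h2 : u.card + 1 ≤ s.card + t.card :=
      le_trans (by simpa [Finset.card_insert_of_notMem hiu] using Finset.card_le_card h1)
        (Finset.card_union_le s t)
    rw [hdd.1, hdd.2.1, hdd.2.2] at h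
    omega
  · intro h
    have hdisj : Disjoint s t := by
      rw [Finset.disjoint_left]
      intro i hisr hit
      simp only [hs, ht, Finset.mem_filter, Finset.mem_univ, true_and] at hisr hit
      have := h i
      revert this hisr hit
      cases a i <;> cases x i <;> cases b i <;> simp
    have hun : s ∪ t = u := by
      apply Finset.Subset.antisymm _ hsub
      intro i hi
      simp only [hs, ht, hu, Finset.mem_union, Finset.mem_filter, Finset.mem_univ, true_and] at *
      have := h i
      revert this hi
      cases a i <;> cases x i <;> cases b i <;> simp
    have := Finset.card_union_of_disjoint hdisj
    rw [hun] at this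
    rw [hdd.1, hdd.2.1, hdd.2.2]
    exact this.symm

lemma hDist_one [Fintype U] [DecidableEq U] {x y : U → Bool} (h : hDist x y = 1) :
    ∃ e, x e ≠ y e ∧ ∀ i, i ≠ e → x i = y i := by
  rw [hDist, Finset.card_eq_one] at h
  obtain ⟨e, he⟩ := h
  refine ⟨e, ?_, ?_⟩
  · have : e ∈ Finset.univ.filter fun i => x i ≠ y i := by rw [he]; simp
    simpa using this
  · intro i hie
    by_contra hxy
    have : i ∈ Finset.univ.filter fun i => x i ≠ y i := by simp [hxy]
    rw [he] at this
    exact hie (Finset.mem_singleton.mp this)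

lemma bool_ne {x y : Bool} (h : x ≠ y) : x = !y := by cases x <;> cases y <;> simp_all

lemma exists_boundary_edge [Fintype U] [DecidableEq U] {H C : Set (U → Bool)}
    (hH : IsPartialCube H) (hCH : C ⊆ H) (hne : C.Nonempty) (hproper : C ≠ H) :
    ∃ c ∈ C, ∃ h ∈ H, h ∉ C ∧ hDist c h = 1 := by
  obtain ⟨c1, hc1⟩ := hne
  have hout : ∃ h ∈ H, h ∉ C := by
    by_contra hco
    push_neg at hco
    exact hproper (Set.Subset.antisymm hCH hco)
  obtain ⟨h1, hh1H, hh1C⟩ := hout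
  have hex : ∃ n, ∃ c ∈ C, ∃ h ∈ H, h ∉ C ∧ hDist c h = n :=
    ⟨_, c1, hc1, h1, hh1H, hh1C, rfl⟩
  obtain ⟨c, hc, h, hhH, hhC, hdch⟩ := Nat.find_spec hex
  set n := Nat.find hex with hn
  have hn0 : n ≠ 0 := by
    intro h0
    rw [h0] at hdch
    exact hhC (hDist_eq_zero hdch ▸ hc)
  rcases Nat.lt_or_ge n 2 with hn2 | hn2
  · have h1 : n = 1 := by omega
    exact ⟨c, hc, h, hhH, hhC, h1 ▸ hdch⟩
  · exfalso
    have hmem : c ∈ H ∧ h ∈ H := ⟨hCH hc, hhH⟩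
    have hdist' : ((cubeGraph U).induce H).dist ⟨c, hmem.1⟩ ⟨h, hmem.2⟩ = n := by
      have := hH.2 c hmem.1 h hmem.2
      rw [dIn, dif_pos hmem] at this
      rw [this, hdch]
    obtain ⟨p, hp⟩ := hH.1.exists_walk_length_eq_dist ⟨c, hmem.1⟩ ⟨h, hmem.2⟩
    rw [hdist'] at hp
    have hpnil : ¬ p.Nil := by
      rw [SimpleGraph.Walk.not_nil_iff_lt_length]
      omega
    set z := p.getVert 1 with hz
    have hadj : ((cubeGraph U).induce H).Adj ⟨c, hmem.1⟩ z := p.adj_snd hpnil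
    have hcz : hDist c z.val = 1 := hadj
    have htl : p.tail.length = n - 1 := by
      have := SimpleGraph.Walk.length_tail_add_one hpnil
      omega
    have hdzh : ((cubeGraph U).induce H).dist z ⟨h, hmem.2⟩ ≤ n - 1 :=
      htl ▸ SimpleGraph.dist_le p.tail
    have hzh : hDist z.val h ≤ n - 1 := by
      have heq := hH.2 z.val z.2 h hmem.2
      rw [dIn, dif_pos ⟨z.2, hmem.2⟩] at heq
      rw [← heq]
      exact hdzh
    by_cases hzC : z.val ∈ C
    · exact Nat.find_min hex (show hDist z.val h < n by omega)
        ⟨z.val, hzC, h, hhH, hhC, rfl⟩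
    · have : n ≤ 1 := Nat.find_min' hex ⟨c, hc, z.val, z.2, hzC, hcz⟩
      omega

theorem stmt8 [Fintype U] [DecidableEq U] (H C : Set (U → Bool)) (d : ℕ)
    (hH : IsPartialCube H) (hant : IsAntipodal H)
    (hvc : ∀ X : Finset U, Shatters H X → X.card ≤ d)
    (hCH : C ⊆ H) (hne : C.Nonempty) (hproper : C ≠ H)
    (hconv : ∀ x ∈ C, ∀ y ∈ C, ∀ z ∈ H, dIn H x z + dIn H z y = dIn H x y → z ∈ C) :
    ∀ X : Finset U, Shatters C X → (X.card : ℤ) ≤ (d : ℤ) - 1 := by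
  intro X hX
  obtain ⟨c0, hc0, h0, hh0H, hh0C, hd01⟩ := exists_boundary_edge hH hCH hne hproper
  obtain ⟨e, he, hee⟩ := hDist_one hd01
  -- C is constant on coordinate e
  have Cconst : ∀ x ∈ C, x e = c0 e := by
    intro x hx
    by_contra hxe
    apply hh0C
    apply hconv c0 hc0 x hx h0 hh0H
    rw [hH.2 c0 (hCH hc0) h0 hh0H, hH.2 h0 hh0H x (hCH hx), hH.2 c0 (hCH hc0) x (hCH hx)]
    rw [hDist_add_eq_iff]
    intro i hcx
    by_cases hie : i = e
    · subst hie
      exact absurd hcx.symm hxe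
    · exact (hee i hie).symm
  -- each shattered coordinate takes both values in C
  have hboth : ∀ i ∈ X, ∀ v : Bool, ∃ a ∈ C, a i = v := by
    intro i hi v
    obtain ⟨a, ha, hag⟩ := hX (fun _ => v)
    exact ⟨a, ha, hag i hi⟩
  have heX : e ∉ X := by
    intro heX
    obtain ⟨a, ha, hae⟩ := hboth e heX (!(c0 e))
    have := Cconst a ha
    simp [this] at hae
  -- antipodal interval property, in hDist form
  have hanti : ∀ a ∈ H, ∃ w ∈ H, ∀ x ∈ H, ∀ i, a i = w i → x i = a i := by
    intro a haH
    obtain ⟨w, hwH, hw⟩ := hant a haH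
    refine ⟨w, hwH, fun x hx => ?_⟩
    have := hw x hx
    rw [hH.2 a haH x hx, hH.2 x hx w hwH, hH.2 a haH w hwH] at this
    exact (hDist_add_eq_iff a x w).mp this
  -- H shatters insert e X
  have hshat : Shatters H (insert e X) := by
    intro g
    by_cases hge : g e = c0 e
    · obtain ⟨a, ha, hag⟩ := hX g
      refine ⟨a, hCH ha, fun i hi => ?_⟩
      rcases Finset.mem_insert.mp hi with rfl | hi
      · rw [Cconst a ha, hge]
      · exact hag i hi
    · obtain ⟨a, ha, hag⟩ := hX (fun i => !(g i))
      obtain ⟨w, hwH, hw⟩ := hanti a (hCH ha)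
      refine ⟨w, hwH, fun i hi => ?_⟩
      rcases Finset.mem_insert.mp hi with rfl | hi
      · have hwa : w i ≠ a i := by
          intro hwa
          exact he ((hw h0 hh0H i hwa.symm).trans (Cconst a ha)).symm
        rw [bool_ne hwa, Cconst a ha, ← bool_ne hge]
      · have hwa : w i ≠ a i := by
          intro hwa
          obtain ⟨x, hx, hxi⟩ := hboth i hi (!(a i))
          have := hw x (hCH hx) i hwa.symm
          simp [this] at hxi
        rw [bool_ne hwa, hag i hi]
        simp
  have hcard := hvc (insert e X) hshat
  rw [Finset.card_insert_of_notMem heX] at hcard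
  omega
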